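/- Let Φγ be the MAD channel with decay rates γ satisfying γ i j ≥ 0 for i < j and ∑_{i<j} γ i j ≤ 1 for each j. Then the rank of Φγ(1_d) equals n1(γ), the number of levels j ∈ Fin d that are not totally depleted. -/

import Mathlib

open Matrix

/-- The Kraus operator `A₀` of the multi-level amplitude damping channel. -/
noncomputable def madA0 {d : ℕ} (γ : Fin d → Fin d → ℝ) : Matrix (Fin d) (Fin d) ℂ :=
  Matrix.diagonal fun j => (Real.sqrt (1 - ∑ i ∈ Finset.Iio j, γ i j) : ℂ)

/-- The multi-level amplitude damping (MAD) channel with decay rates `γ`. -/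
noncomputable def madChannel {d : ℕ} (γ : Fin d → Fin d → ℝ)
    (X : Matrix (Fin d) (Fin d) ℂ) : Matrix (Fin d) (Fin d) ℂ :=
  madA0 γ * X * (madA0 γ)ᴴ + ∑ j, ∑ i ∈ Finset.Iio j, (γ i j : ℂ) •
    (Matrix.single i j 1 * X * Matrix.single j i 1)

/-- A level `j` is totally depleted if no higher level decays into it and the total decay
rate out of it is one. -/
def totallyDepleted {d : ℕ} (γ : Fin d → Fin d → ℝ) (j : Fin d) : Prop :=
  (∑ i ∈ Finset.Iio j, γ i j = 1) ∧ ∀ k, j < k → γ j k = 0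

/-- The number of levels that are not totally depleted. -/
noncomputable def madN1 {d : ℕ} (γ : Fin d → Fin d → ℝ) : ℕ :=
  Nat.card {j : Fin d // ¬ totallyDepleted γ j}

/-- The number of nonzero decay rates. -/
noncomputable def madN2 {d : ℕ} (γ : Fin d → Fin d → ℝ) : ℕ :=
  Nat.card {p : Fin d × Fin d // p.1 < p.2 ∧ γ p.1 p.2 ≠ 0}

theorem stmt6 {d : ℕ} (hd : 1 ≤ d) (γ : Fin d → Fin d → ℝ)
    (hγ : ∀ i j : Fin d, i < j → 0 ≤ γ i j)
    (hγsum : ∀ j : Fin d, ∑ i ∈ Finset.Iio j, γ i j ≤ 1) :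
    (madChannel γ 1).rank = madN1 γ := by
  classical
  set f : Fin d → ℂ := fun k =>
    (((1 - ∑ i ∈ Finset.Iio k, γ i k) + ∑ j ∈ Finset.Ioi k, γ k j : ℝ) : ℂ) with hf
  have key : madChannel γ 1 = Matrix.diagonal f := by
    unfold madChannel madA0
    simp only [Matrix.mul_one, Matrix.diagonal_conjTranspose,
      Matrix.diagonal_mul_diagonal, Matrix.single_mul_single_same, one_mul]
    ext a b
    by_cases hab : a = b
    · subst hab
      simp only [Matrix.add_apply, Matrix.diagonal_apply_eq, Matrix.sum_apply,
        Matrix.smul_apply, Pi.star_apply, hf]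
      have hs : ∀ i : Fin d, (γ i : Fin d → ℝ) = γ i := fun _ => rfl
      have h1 : ∀ i j : Fin d, (Matrix.single i i (1:ℂ)) a a = if i = a then 1 else 0 := by
        intro i j
        by_cases h : i = a <;> simp [Matrix.single, h]
      have h2 : (∑ j, ∑ i ∈ Finset.Iio j, (γ i j : ℂ) • (Matrix.single i i (1:ℂ)) a a)
          = ∑ j ∈ Finset.Ioi a, (γ a j : ℂ) := by
        have : ∀ j : Fin d, (∑ i ∈ Finset.Iio j, (γ i j : ℂ) • (Matrix.single i i (1:ℂ)) a a)
            = if j ∈ Finset.Ioi a then (γ a j : ℂ) else 0 := by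
          intro j
          rw [Finset.sum_congr rfl (fun i _ => by rw [h1 i j])]
          simp only [smul_eq_mul, mul_ite, mul_one, mul_zero]
          rw [Finset.sum_ite_eq' (Finset.Iio j) a (fun i => (γ i j : ℂ))]
          simp [Finset.mem_Iio, Finset.mem_Ioi]
        rw [Finset.sum_congr rfl (fun j _ => this j), Finset.sum_ite_mem,
          Finset.univ_inter]
      rw [h2]
      have hnn : 0 ≤ 1 - ∑ i ∈ Finset.Iio a, γ i a := by
        linarith [hγsum a]
      have hstar : star ((Real.sqrt (1 - ∑ i ∈ Finset.Iio a, γ i a) : ℝ) : ℂ)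
          = ((Real.sqrt (1 - ∑ i ∈ Finset.Iio a, γ i a) : ℝ) : ℂ) := by
        exact Complex.conj_ofReal _
      rw [hstar]
      push_cast
      rw [← Complex.ofReal_mul, Real.mul_self_sqrt hnn]
      push_cast
      ring
    · simp only [Matrix.add_apply, Matrix.diagonal_apply_ne _ hab, Matrix.sum_apply,
        Matrix.smul_apply]
      have : ∀ i : Fin d, (Matrix.single i i (1:ℂ)) a b = 0 := by
        intro i
        by_cases h : i = a
        · subst h; simp [Matrix.single, hab]
        · simp [Matrix.single, h]
      simp [this]
  have hiff : ∀ k : Fin d, f k ≠ 0 ↔ ¬ totallyDepleted γ k := by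
    intro k
    rw [not_iff_not]
    constructor
    · intro h
      rw [hf] at h
      simp only [Complex.ofReal_eq_zero] at h
      have hx : 0 ≤ 1 - ∑ i ∈ Finset.Iio k, γ i k := by linarith [hγsum k]
      have hy : 0 ≤ ∑ j ∈ Finset.Ioi k, γ k j :=
        Finset.sum_nonneg fun j hj => hγ k j (Finset.mem_Ioi.mp hj)
      have h0 := (add_eq_zero_iff_of_nonneg hx hy).mp h
      refine ⟨by linarith [h0.1], fun j hj => ?_⟩
      have := (Finset.sum_eq_zero_iff_of_nonneg
        (fun j hj => hγ k j (Finset.mem_Ioi.mp hj))).mp h0.2 j (Finset.mem_Ioi.mpr hj)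
      exact this
    · rintro ⟨h1, h2⟩
      rw [hf]
      simp only [Complex.ofReal_eq_zero]
      rw [h1, Finset.sum_eq_zero fun j hj => h2 j (Finset.mem_Ioi.mp hj)]
      ring
  rw [key, Matrix.rank_diagonal]
  rw [madN1, Nat.card_eq_fintype_card]
  exact Fintype.card_congr (Equiv.subtypeEquivRight hiff)
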